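/- Consider the fixed-design linear model y = Xβ + e with X ∈ ℝ^{n×2}, orthonormal design XᵀX = n·I₂, β = (β₁,β₂), and noise e ∈ ℝⁿ with law ⨂ⁿ N(0, γ²), γ > 0. Fix a detector error ε ∈ [0,1] and λ ≥ 0, and let β̂_{C,λ} = (XᵀX + nλD_C)⁻¹Xᵀy with D_C = diag(ε, 1−ε) be the L₂-norm causally regularized estimate. Then the causality accuracy C(β̂_{C,λ}) = P[(β̂_{C,λ})₁ > (β̂_{C,λ})₂] satisfies C(β̂_{C,λ}) = Φ( (√n/γ) · ((1+λ(1−ε))β₁ − (1+λε)β₂) / √((1+λε)² + (1+λ(1−ε))²) ), where Φ is the standard Gaussian CDF and the probability is taken over the noise measure ⨂ⁿ N(0, γ²). -/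

import Mathlib

open MeasureTheory ProbabilityTheory Matrix Finset

open Real
open scoped NNReal ENNReal


lemma pdf_mul_eq (v₁ v₂ : ℝ≥0) (hv₁ : v₁ ≠ 0) (hv₂ : v₂ ≠ 0) (z x : ℝ) :
    gaussianPDFReal 0 v₁ x * gaussianPDFReal 0 v₂ (z - x)
      = gaussianPDFReal 0 (v₁ + v₂) z *
        ((Real.sqrt (π / (((v₁:ℝ) + v₂) / (2 * v₁ * v₂))))⁻¹ *
          Real.exp (-(((v₁:ℝ) + v₂) / (2 * v₁ * v₂)) * (x - (v₁:ℝ) * z / ((v₁:ℝ)+v₂)) ^ 2)) := by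
  have ha : (0:ℝ) < v₁ := lt_of_le_of_ne v₁.coe_nonneg (by exact_mod_cast (Ne.symm hv₁))
  have hb : (0:ℝ) < v₂ := lt_of_le_of_ne v₂.coe_nonneg (by exact_mod_cast (Ne.symm hv₂))
  set a : ℝ := (v₁:ℝ) with hadef
  set b : ℝ := (v₂:ℝ) with hbdef
  have hV : (0:ℝ) < a + b := by linarith
  have hπ := Real.pi_pos
  simp only [gaussianPDFReal, NNReal.coe_add, sub_zero, ← hadef, ← hbdef]
  have hc : Real.sqrt (2*π*a) * Real.sqrt (2*π*b)
      = Real.sqrt (2*π*(a+b)) * Real.sqrt (π / ((a+b)/(2*a*b))) := by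
    rw [← Real.sqrt_mul (by positivity), ← Real.sqrt_mul (by positivity)]
    congr 1
    field_simp
  have hexp : -x ^ 2 / (2 * a) + -(z - x) ^ 2 / (2 * b)
      = -z ^ 2 / (2 * (a + b)) + (-((a + b) / (2 * a * b)) * (x - a * z / (a + b)) ^ 2) := by
    field_simp
    ring
  have h1 : ((Real.sqrt (2*π*a))⁻¹ * (Real.sqrt (2*π*b))⁻¹)
      = (Real.sqrt (2*π*(a+b)))⁻¹ * (Real.sqrt (π / ((a+b)/(2*a*b))))⁻¹ := by
    rw [← mul_inv, ← mul_inv, hc]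
  calc (√(2 * π * a))⁻¹ * rexp (-x ^ 2 / (2 * a)) * ((√(2 * π * b))⁻¹ * rexp (-(z - x) ^ 2 / (2 * b)))
      = ((√(2 * π * a))⁻¹ * (√(2 * π * b))⁻¹) * rexp (-x ^ 2 / (2 * a) + -(z - x) ^ 2 / (2 * b)) := by
        rw [Real.exp_add]; ring
    _ = _ := by rw [h1, hexp, Real.exp_add]; ring

lemma conv_pdf_integrable (v₁ v₂ : ℝ≥0) (hv₁ : v₁ ≠ 0) (hv₂ : v₂ ≠ 0) (z : ℝ) :
    Integrable (fun x => gaussianPDFReal 0 v₁ x * gaussianPDFReal 0 v₂ (z - x)) := by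
  have ha : (0:ℝ) < v₁ := lt_of_le_of_ne v₁.coe_nonneg (by exact_mod_cast (Ne.symm hv₁))
  have hb : (0:ℝ) < v₂ := lt_of_le_of_ne v₂.coe_nonneg (by exact_mod_cast (Ne.symm hv₂))
  have hB : (0:ℝ) < ((v₁:ℝ) + v₂) / (2 * v₁ * v₂) := by positivity
  simp only [pdf_mul_eq v₁ v₂ hv₁ hv₂ z]
  have : Integrable (fun x : ℝ =>
      Real.exp (-(((v₁:ℝ) + v₂) / (2 * v₁ * v₂)) * (x - (v₁:ℝ) * z / ((v₁:ℝ)+v₂)) ^ 2)) := by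
    have := (integrable_exp_neg_mul_sq hB).comp_sub_right ((v₁:ℝ) * z / ((v₁:ℝ)+v₂))
    exact this
  exact (this.const_mul _).const_mul _

lemma conv_pdf_eq (v₁ v₂ : ℝ≥0) (hv₁ : v₁ ≠ 0) (hv₂ : v₂ ≠ 0) (z : ℝ) :
    ∫ x, gaussianPDFReal 0 v₁ x * gaussianPDFReal 0 v₂ (z - x)
      = gaussianPDFReal 0 (v₁ + v₂) z := by
  have ha : (0:ℝ) < v₁ := lt_of_le_of_ne v₁.coe_nonneg (by exact_mod_cast (Ne.symm hv₁))
  have hb : (0:ℝ) < v₂ := lt_of_le_of_ne v₂.coe_nonneg (by exact_mod_cast (Ne.symm hv₂))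
  set B : ℝ := ((v₁:ℝ) + v₂) / (2 * v₁ * v₂) with hBdef
  have hB : (0:ℝ) < B := by positivity
  set m : ℝ := (v₁:ℝ) * z / ((v₁:ℝ)+v₂) with hmdef
  have key : ∫ x, Real.exp (-B * (x - m) ^ 2) = Real.sqrt (π / B) := by
    have h1 : ∫ x, (fun y => Real.exp (-B * y ^ 2)) (x + -m)
        = ∫ x, Real.exp (-B * x ^ 2) :=
      MeasureTheory.integral_add_right_eq_self (fun y => Real.exp (-B * y ^ 2)) (-m)
    simp only [← sub_eq_add_neg] at h1
    rw [h1, integral_gaussian]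
  simp only [pdf_mul_eq v₁ v₂ hv₁ hv₂ z]
  rw [integral_const_mul, integral_const_mul, key]
  rw [inv_mul_cancel₀ (by positivity), mul_one]

lemma gaussian_map_add_prod (v₁ v₂ : ℝ≥0) :
    Measure.map (fun p : ℝ × ℝ => p.1 + p.2)
      ((gaussianReal 0 v₁).prod (gaussianReal 0 v₂)) = gaussianReal 0 (v₁ + v₂) := by
  by_cases hv₁ : v₁ = 0
  · subst hv₁
    rw [gaussianReal_zero_var, Measure.dirac_prod, zero_add,
      Measure.map_map measurable_add (measurable_prodMk_left)]
    simp only [Function.comp_def, zero_add]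
    exact Measure.map_id
  by_cases hv₂ : v₂ = 0
  · subst hv₂
    rw [gaussianReal_zero_var, Measure.prod_dirac, add_zero,
      Measure.map_map measurable_add (measurable_prodMk_right)]
    simp only [Function.comp_def, add_zero]
    exact Measure.map_id
  have hv : v₁ + v₂ ≠ 0 := by positivity
  haveI : IsProbabilityMeasure (Measure.map (fun p : ℝ × ℝ => p.1 + p.2)
      ((gaussianReal 0 v₁).prod (gaussianReal 0 v₂))) :=
    Measure.isProbabilityMeasure_map measurable_add.aemeasurable
  refine MeasureTheory.Measure.ext_of_Iic _ _ (fun t => ?_)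
  rw [Measure.map_apply measurable_add measurableSet_Iic]
  rw [Measure.prod_apply (measurable_add measurableSet_Iic)]
  have hpre : ∀ x : ℝ, Prod.mk x ⁻¹' ((fun p : ℝ × ℝ => p.1 + p.2) ⁻¹' (Set.Iic t))
      = Set.Iic (t - x) := by
    intro x; ext y; simp only [Set.mem_preimage, Set.mem_Iic]
    constructor <;> intro h <;> linarith
  simp only [hpre]
  -- rewrite inner measure as shifted set lintegral
  have hshift : ∀ x : ℝ, (gaussianReal 0 v₂) (Set.Iic (t - x))
      = ∫⁻ w in Set.Iic t, gaussianPDF 0 v₂ (w - x) := by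
    intro x
    rw [gaussianReal_apply _ hv₂]
    have hmp : MeasurePreserving (fun y : ℝ => y + x) volume volume :=
      measurePreserving_add_right volume x
    have hemb : MeasurableEmbedding (fun y : ℝ => y + x) :=
      (Homeomorph.addRight x).measurableEmbedding
    have := hmp.setLIntegral_comp_preimage_emb hemb
      (fun w => gaussianPDF 0 v₂ (w - x)) (Set.Iic t)
    have hpre2 : (fun y : ℝ => y + x) ⁻¹' (Set.Iic t) = Set.Iic (t - x) := by
      ext y; simp only [Set.mem_preimage, Set.mem_Iic]
      constructor <;> intro h <;> linarith
    rw [hpre2] at this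
    rw [← this]
    congr 1 with y
    congr 1
    ring
  simp only [hshift]
  rw [gaussianReal_of_var_ne_zero _ hv₁]
  have hmeas2 : Measurable (Function.uncurry fun x w => gaussianPDF 0 v₂ (w - x)) :=
    (measurable_gaussianPDF 0 v₂).comp (measurable_snd.sub measurable_fst)
  rw [lintegral_withDensity_eq_lintegral_mul _ (measurable_gaussianPDF 0 v₁)
    (hmeas2.lintegral_prod_right)]
  simp only [Pi.mul_apply]
  have hswap : ∫⁻ x, gaussianPDF 0 v₁ x * ∫⁻ w in Set.Iic t, gaussianPDF 0 v₂ (w - x)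
      = ∫⁻ x, ∫⁻ w in Set.Iic t, gaussianPDF 0 v₁ x * gaussianPDF 0 v₂ (w - x) := by
    congr 1 with x
    exact (lintegral_const_mul _ ((measurable_gaussianPDF 0 v₂).comp
      (measurable_id.sub_const x))).symm
  rw [hswap]
  rw [lintegral_lintegral_swap (by
    exact (((measurable_gaussianPDF 0 v₁).comp measurable_fst).mul
      ((measurable_gaussianPDF 0 v₂).comp (measurable_snd.sub measurable_fst))).aemeasurable)]
  have hinner : ∀ w : ℝ, ∫⁻ x, gaussianPDF 0 v₁ x * gaussianPDF 0 v₂ (w - x)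
      = gaussianPDF 0 (v₁ + v₂) w := by
    intro w
    have : ∀ x : ℝ, gaussianPDF 0 v₁ x * gaussianPDF 0 v₂ (w - x)
        = ENNReal.ofReal (gaussianPDFReal 0 v₁ x * gaussianPDFReal 0 v₂ (w - x)) := by
      intro x
      rw [gaussianPDF, gaussianPDF, ← ENNReal.ofReal_mul (gaussianPDFReal_nonneg 0 v₁ x)]
    simp only [this]
    rw [← MeasureTheory.ofReal_integral_eq_lintegral_ofReal
      (conv_pdf_integrable v₁ v₂ hv₁ hv₂ w)
      (Filter.Eventually.of_forall (fun x => mul_nonneg (gaussianPDFReal_nonneg 0 v₁ x)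
        (gaussianPDFReal_nonneg 0 v₂ (w - x))))]
    rw [conv_pdf_eq v₁ v₂ hv₁ hv₂ w, gaussianPDF]
  simp only [hinner]
  rw [← gaussianReal_apply _ hv]

lemma pi_gaussian_map_sum (v : ℝ≥0) :
    ∀ (n : ℕ) (c : Fin n → ℝ),
      Measure.map (fun e : Fin n → ℝ => ∑ i, c i * e i)
          (Measure.pi fun _ : Fin n => gaussianReal 0 v)
        = gaussianReal 0 (⟨∑ i, (c i)^2, Finset.sum_nonneg fun i _ => sq_nonneg _⟩ * v) := by
  intro n
  induction n with
  | zero =>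
    intro c
    simp only [Finset.univ_eq_empty, Finset.sum_empty]
    have : (⟨(0:ℝ), le_refl 0⟩ * v : ℝ≥0) = 0 := by
      exact zero_mul v
    rw [this, gaussianReal_zero_var]
    haveI : IsProbabilityMeasure (Measure.pi fun _ : Fin 0 => gaussianReal 0 v) :=
      inferInstance
    rw [show (fun _ : Fin 0 → ℝ => (0:ℝ)) = (fun _ => 0) from rfl, Measure.map_const]
    simp
  | succ n ih =>
    intro c
    have hψ := measurePreserving_piFinSuccAbove (fun _ : Fin (n+1) => gaussianReal 0 v) 0
    set ψ := MeasurableEquiv.piFinSuccAbove (fun _ : Fin (n+1) => ℝ) 0 with hψdef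
    have hg : (fun e : Fin (n+1) → ℝ => ∑ i, c i * e i)
        = (fun p : ℝ × (Fin n → ℝ) => c 0 * p.1 + ∑ j : Fin n, c j.succ * p.2 j) ∘ ψ := by
      funext e
      simp only [Function.comp_apply, hψdef, MeasurableEquiv.piFinSuccAbove_apply,
        Fin.insertNthEquiv, Fin.removeNth]
      rw [Fin.sum_univ_succ]
      rfl
    rw [hg, ← Measure.map_map (by fun_prop) ψ.measurable, hψ.map_eq]
    have hsplit : (fun p : ℝ × (Fin n → ℝ) => c 0 * p.1 + ∑ j : Fin n, c j.succ * p.2 j)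
        = (fun q : ℝ × ℝ => q.1 + q.2) ∘
          (Prod.map (fun x : ℝ => c 0 * x) (fun y : Fin n → ℝ => ∑ j : Fin n, c j.succ * y j)) := by
      funext p; rfl
    rw [hsplit, ← Measure.map_map measurable_add (by fun_prop)]
    rw [← Measure.map_prod_map _ _ (by fun_prop) (by fun_prop)]
    rw [gaussianReal_map_const_mul (c 0), mul_zero]
    rw [ih (fun j => c j.succ)]
    rw [gaussian_map_add_prod]
    congr 1
    ext
    push_cast
    show c 0 ^ 2 * (v:ℝ) + (∑ i : Fin n, c i.succ ^ 2) * (v:ℝ) = (∑ i, c i ^ 2) * (v:ℝ)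
    rw [Fin.sum_univ_succ]
    ring

/-- The cumulative distribution function `Φ` of the standard Gaussian
measure `N(0,1)`. -/
noncomputable def stdGaussianCDF (t : ℝ) : ℝ :=
  ((gaussianReal 0 1) (Set.Iic t)).toReal


lemma gaussianReal_Iic_toReal (V : ℝ≥0) (hV : V ≠ 0) (u : ℝ) :
    ((gaussianReal 0 V) (Set.Iic u)).toReal = stdGaussianCDF (u / Real.sqrt V) := by
  have hVpos : (0:ℝ) < V := lt_of_le_of_ne V.coe_nonneg (by exact_mod_cast (Ne.symm hV))
  have hsq : (0:ℝ) < Real.sqrt V := Real.sqrt_pos.mpr hVpos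
  have hmap : Measure.map (fun x : ℝ => (Real.sqrt V)⁻¹ * x) (gaussianReal 0 V)
      = gaussianReal 0 1 := by
    rw [gaussianReal_map_const_mul]
    rw [mul_zero]
    congr 1
    ext
    push_cast
    rw [inv_pow, Real.sq_sqrt V.coe_nonneg]
    exact inv_mul_cancel₀ (ne_of_gt hVpos)
  rw [stdGaussianCDF, ← hmap,
    Measure.map_apply (measurable_const_mul _) measurableSet_Iic]
  congr 2
  ext x
  simp only [Set.mem_preimage, Set.mem_Iic]
  rw [div_eq_inv_mul]
  exact (mul_le_mul_iff_right₀ (inv_pos.mpr hsq)).symm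

lemma gaussianReal_Ioi_toReal (V : ℝ≥0) (hV : V ≠ 0) (t : ℝ) :
    ((gaussianReal 0 V) (Set.Ioi t)).toReal = stdGaussianCDF (-t / Real.sqrt V) := by
  have hVpos : (0:ℝ) < V := lt_of_le_of_ne V.coe_nonneg (by exact_mod_cast (Ne.symm hV))
  have hneg : Measure.map (fun x : ℝ => (-1 : ℝ) * x) (gaussianReal 0 V)
      = gaussianReal 0 V := by
    rw [gaussianReal_map_const_mul, mul_zero]
    congr 1
    ext; push_cast; ring
  have hsingle : (gaussianReal 0 V) {t} = 0 :=
    gaussianReal_absolutelyContinuous 0 hV (Real.volume_singleton)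
  have hIci : (gaussianReal 0 V) (Set.Ici t) = (gaussianReal 0 V) (Set.Ioi t) := by
    have : Set.Ici t = {t} ∪ Set.Ioi t := by
      rw [← Set.Ioi_insert, Set.insert_eq]
    rw [this]
    refine le_antisymm ?_ (measure_mono Set.subset_union_right)
    calc (gaussianReal 0 V) ({t} ∪ Set.Ioi t)
        ≤ (gaussianReal 0 V) {t} + (gaussianReal 0 V) (Set.Ioi t) := measure_union_le _ _
      _ = (gaussianReal 0 V) (Set.Ioi t) := by rw [hsingle, zero_add]
  have hflip : (gaussianReal 0 V) (Set.Iic (-t)) = (gaussianReal 0 V) (Set.Ici t) := by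
    conv_lhs => rw [← hneg]
    rw [Measure.map_apply (measurable_const_mul _) measurableSet_Iic]
    congr 1
    ext x
    simp only [Set.mem_preimage, Set.mem_Iic, Set.mem_Ici]
    constructor <;> intro h <;> linarith
  rw [← hIci, ← hflip, gaussianReal_Iic_toReal V hV]

set_option maxHeartbeats 1000000 in
/-- **Theorem 1, Eq. (3), exact Gaussian form.**
In the fixed-design model `y = Xβ + e` with orthonormal design `XᵀX = n·I₂`
and noise `e ~ ⨂ⁿ N(0,γ²)`, the causality accuracy of the causally
regularized estimate `β̂_{C,λ} = (XᵀX + nλ·diag(ε, 1−ε))⁻¹ Xᵀ y` is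
`C(β̂_{C,λ}) = Φ((√n/γ)·((1+λ(1−ε))β₁ − (1+λε)β₂)/√((1+λε)² + (1+λ(1−ε))²))`. -/
theorem causal_regularizer_causality_accuracy
    (n : ℕ) (hn : 1 ≤ n)
    (X : Matrix (Fin n) (Fin 2) ℝ)
    (hX : Xᵀ * X = (n : ℝ) • (1 : Matrix (Fin 2) (Fin 2) ℝ))
    (β : Fin 2 → ℝ) (γ : ℝ) (hγ : 0 < γ)
    (ε : ℝ) (hε : ε ∈ Set.Icc (0 : ℝ) 1)
    (lam : ℝ) (hlam : 0 ≤ lam) :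
    let μnoise : Measure (Fin n → ℝ) :=
      Measure.pi fun _ : Fin n => gaussianReal 0 (Real.toNNReal (γ ^ 2))
    let DC : Matrix (Fin 2) (Fin 2) ℝ := Matrix.diagonal ![ε, 1 - ε]
    let βC : (Fin n → ℝ) → (Fin 2 → ℝ) := fun e =>
      (Xᵀ * X + (n : ℝ) • lam • DC)⁻¹ *ᵥ (Xᵀ *ᵥ (X *ᵥ β + e))
    (μnoise {e | βC e 0 > βC e 1}).toReal
      = stdGaussianCDF ((Real.sqrt n / γ) *
          (((1 + lam * (1 - ε)) * β 0 - (1 + lam * ε) * β 1) /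
            Real.sqrt ((1 + lam * ε) ^ 2 + (1 + lam * (1 - ε)) ^ 2))) := by
  intro μnoise DC βC
  obtain ⟨hε0, hε1⟩ := hε
  set a : ℝ := 1 + lam * ε with hadef
  set b : ℝ := 1 + lam * (1 - ε) with hbdef
  have ha : 0 < a := by nlinarith
  have hb : 0 < b := by nlinarith
  have hnR : (0:ℝ) < (n:ℝ) := by exact_mod_cast hn
  -- matrix algebra
  have hM : Xᵀ * X + (n : ℝ) • lam • DC = Matrix.diagonal ![(n:ℝ) * a, (n:ℝ) * b] := by
    rw [hX]
    ext i j
    fin_cases i <;> fin_cases j <;>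
      simp [DC, Matrix.diagonal, Matrix.one_apply, hadef, hbdef] <;> ring
  have hMinv : (Matrix.diagonal ![(n:ℝ) * a, (n:ℝ) * b])⁻¹
      = Matrix.diagonal ![((n:ℝ) * a)⁻¹, ((n:ℝ) * b)⁻¹] := by
    apply Matrix.inv_eq_right_inv
    ext i j
    fin_cases i <;> fin_cases j <;>
      simp [Matrix.mul_apply, Fin.sum_univ_two, Matrix.diagonal, Matrix.one_apply] <;>
      field_simp <;> ring
  have hβC : ∀ (e : Fin n → ℝ) (i : Fin 2),
      βC e i = (![((n:ℝ) * a)⁻¹, ((n:ℝ) * b)⁻¹] i) * ((n:ℝ) * β i + (Xᵀ *ᵥ e) i) := by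
    intro e i
    show ((Xᵀ * X + (n : ℝ) • lam • DC)⁻¹ *ᵥ (Xᵀ *ᵥ (X *ᵥ β + e))) i = _
    rw [hM, hMinv, Matrix.mulVec_add, Matrix.mulVec_mulVec, hX,
      Matrix.smul_mulVec, Matrix.one_mulVec, Matrix.mulVec_diagonal]
    simp [Pi.smul_apply, smul_eq_mul]
  -- column identities from orthonormality
  have h00 : ∑ j, X j 0 * X j 0 = (n:ℝ) := by
    have := congrFun (congrFun hX 0) 0
    simpa [Matrix.mul_apply, Matrix.one_apply, Matrix.transpose_apply] using this
  have h11 : ∑ j, X j 1 * X j 1 = (n:ℝ) := by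
    have := congrFun (congrFun hX 1) 1
    simpa [Matrix.mul_apply, Matrix.one_apply, Matrix.transpose_apply] using this
  have h01 : ∑ j, X j 0 * X j 1 = 0 := by
    have := congrFun (congrFun hX 0) 1
    simpa [Matrix.mul_apply, Matrix.one_apply, Matrix.transpose_apply] using this
  -- the linear functional
  set c : Fin n → ℝ := fun j => b * X j 0 - a * X j 1 with hcdef
  set t : ℝ := (n:ℝ) * (a * β 1 - b * β 0) with htdef
  have hev : {e : Fin n → ℝ | βC e 0 > βC e 1}
      = (fun e : Fin n → ℝ => ∑ j, c j * e j) ⁻¹' (Set.Ioi t) := by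
    ext e
    simp only [Set.mem_setOf_eq, Set.mem_preimage, Set.mem_Ioi, gt_iff_lt]
    rw [hβC e 0, hβC e 1]
    have hS0 : (Xᵀ *ᵥ e) 0 = ∑ j, X j 0 * e j := by
      simp [Matrix.mulVec, dotProduct, Matrix.transpose_apply]
    have hS1 : (Xᵀ *ᵥ e) 1 = ∑ j, X j 1 * e j := by
      simp [Matrix.mulVec, dotProduct, Matrix.transpose_apply]
    rw [hS0, hS1]
    have hsum : ∑ j, c j * e j
        = b * (∑ j, X j 0 * e j) - a * (∑ j, X j 1 * e j) := by
      rw [Finset.mul_sum, Finset.mul_sum, ← Finset.sum_sub_distrib]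
      exact Finset.sum_congr rfl fun j _ => by rw [hcdef]; ring
    rw [hsum]
    simp only [Matrix.cons_val_zero, Matrix.cons_val_one, Matrix.head_cons]
    rw [inv_mul_eq_div, inv_mul_eq_div, div_lt_div_iff₀ (by positivity) (by positivity)]
    constructor <;> intro h <;> nlinarith [h]
  rw [hev]
  -- push forward
  have hv : Real.toNNReal (γ ^ 2) ≠ 0 := by
    simp only [ne_eq, Real.toNNReal_eq_zero, not_le]
    positivity
  have hL : Measurable (fun e : Fin n → ℝ => ∑ j, c j * e j) := by
    exact Finset.measurable_sum _ fun j _ => (measurable_pi_apply j).const_mul _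
  rw [← Measure.map_apply hL measurableSet_Ioi]
  rw [pi_gaussian_map_sum _ n c]
  -- variance computation
  have hcsq : ∑ j, (c j)^2 = (n:ℝ) * (a^2 + b^2) := by
    calc ∑ j, (c j)^2
        = ∑ j, (b^2 * (X j 0 * X j 0) - 2*a*b*(X j 0 * X j 1) + a^2 * (X j 1 * X j 1)) :=
          Finset.sum_congr rfl fun j _ => by rw [hcdef]; ring
      _ = b^2 * (∑ j, X j 0 * X j 0) - 2*a*b*(∑ j, X j 0 * X j 1)
            + a^2 * (∑ j, X j 1 * X j 1) := by
          rw [Finset.sum_add_distrib, Finset.sum_sub_distrib, ← Finset.mul_sum,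
            ← Finset.mul_sum, ← Finset.mul_sum]
      _ = (n:ℝ) * (a^2 + b^2) := by rw [h00, h01, h11]; ring
  set V : ℝ≥0 := ⟨∑ j, (c j)^2, Finset.sum_nonneg fun j _ => sq_nonneg _⟩ * Real.toNNReal (γ ^ 2)
    with hVdef
  have hVne : V ≠ 0 := by
    rw [hVdef]
    apply mul_ne_zero _ hv
    intro h
    have : (∑ j, (c j)^2) = 0 := congrArg NNReal.toReal h
    rw [hcsq] at this
    have hpos : (0:ℝ) < (n:ℝ) * (a^2 + b^2) := by positivity
    linarith
  rw [gaussianReal_Ioi_toReal V hVne]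
  -- final arithmetic
  have hVcoe : (V:ℝ) = (n:ℝ) * (a^2 + b^2) * γ^2 := by
    rw [hVdef]
    push_cast [Real.coe_toNNReal _ (by positivity : (0:ℝ) ≤ γ^2)]
    show (∑ j, c j ^ 2) * ((Real.toNNReal (γ^2)):ℝ) = (n:ℝ) * (a^2 + b^2) * γ^2
    rw [Real.coe_toNNReal _ (by positivity), hcsq]
  have hsqrtV : Real.sqrt V = Real.sqrt n * Real.sqrt (a^2+b^2) * γ := by
    rw [hVcoe, Real.sqrt_mul (by positivity), Real.sqrt_mul (by positivity),
      Real.sqrt_sq hγ.le]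
  rw [hsqrtV]
  congr 1
  have hsn : Real.sqrt n * Real.sqrt n = (n:ℝ) := Real.mul_self_sqrt (by positivity)
  have hsab : (0:ℝ) < Real.sqrt (a^2+b^2) := Real.sqrt_pos.mpr (by positivity)
  have hsn' : (0:ℝ) < Real.sqrt n := Real.sqrt_pos.mpr hnR
  rw [htdef]
  field_simp
  rw [Real.sq_sqrt hnR.le]
  ring
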